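/- For every natural number n ≥ 9, the Tetranacci numbers satisfy 6·∑_{k=0}^{n} u_k² = 2 + 2·u_n u_{n+2} + u_{n−1} u_{n+1} − u_{n−2} u_n − u_{n−3} u_{n−1} + 5·u_{n−4} u_{n−2} + 4·u_{n−5} u_{n−3} + u_{n−6} u_{n−4} + u_{n−7} u_{n−5} − u_{n−8} u_{n−6} − u_{n−9} u_{n−7}. -/
import Mathlib


/-- The Tetranacci numbers: u 0 = 0, u 1 = 1, u 2 = 1, u 3 = 2 and
    u (n+4) = u (n+3) + u (n+2) + u (n+1) + u n. -/
def tetra : ℕ → ℤ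
  | 0 => 0
  | 1 => 1
  | 2 => 1
  | 3 => 2
  | n + 4 => tetra (n + 3) + tetra (n + 2) + tetra (n + 1) + tetra n

lemma tetra_add4 (n : ℕ) : tetra (n + 4) = tetra (n + 3) + tetra (n + 2) + tetra (n + 1) + tetra n := rfl

lemma tetra_aux (m : ℕ) :
    6 * ∑ k ∈ Finset.range (m + 10), (tetra k) ^ 2 =
      2 + 2 * tetra (m + 9) * tetra (m + 11) + tetra (m + 8) * tetra (m + 10)
        - tetra (m + 7) * tetra (m + 9) - tetra (m + 6) * tetra (m + 8)
        + 5 * tetra (m + 5) * tetra (m + 7) + 4 * tetra (m + 4) * tetra (m + 6)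
        + tetra (m + 3) * tetra (m + 5) + tetra (m + 2) * tetra (m + 4)
        - tetra (m + 1) * tetra (m + 3) - tetra m * tetra (m + 2) := by
  induction m with
  | zero => norm_num [Finset.sum_range_succ, tetra]
  | succ m ih =>
    have e4 : tetra (m + 4) = tetra (m + 3) + tetra (m + 2) + tetra (m + 1) + tetra (m + 0) := by
      rw [show m + 4 = m + 0 + 4 by omega]; exact tetra_add4 _
    have e5 : tetra (m + 5) = tetra (m + 4) + tetra (m + 3) + tetra (m + 2) + tetra (m + 1) := by
      rw [show m + 5 = m + 1 + 4 by omega]; exact tetra_add4 _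
    have e6 : tetra (m + 6) = tetra (m + 5) + tetra (m + 4) + tetra (m + 3) + tetra (m + 2) := by
      rw [show m + 6 = m + 2 + 4 by omega]; exact tetra_add4 _
    have e7 : tetra (m + 7) = tetra (m + 6) + tetra (m + 5) + tetra (m + 4) + tetra (m + 3) := by
      rw [show m + 7 = m + 3 + 4 by omega]; exact tetra_add4 _
    have e8 : tetra (m + 8) = tetra (m + 7) + tetra (m + 6) + tetra (m + 5) + tetra (m + 4) := by
      rw [show m + 8 = m + 4 + 4 by omega]; exact tetra_add4 _
    have e9 : tetra (m + 9) = tetra (m + 8) + tetra (m + 7) + tetra (m + 6) + tetra (m + 5) := by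
      rw [show m + 9 = m + 5 + 4 by omega]; exact tetra_add4 _
    have e10 : tetra (m + 10) = tetra (m + 9) + tetra (m + 8) + tetra (m + 7) + tetra (m + 6) := by
      rw [show m + 10 = m + 6 + 4 by omega]; exact tetra_add4 _
    have e11 : tetra (m + 11) = tetra (m + 10) + tetra (m + 9) + tetra (m + 8) + tetra (m + 7) := by
      rw [show m + 11 = m + 7 + 4 by omega]; exact tetra_add4 _
    have e12 : tetra (m + 12) = tetra (m + 11) + tetra (m + 10) + tetra (m + 9) + tetra (m + 8) := by
      rw [show m + 12 = m + 8 + 4 by omega]; exact tetra_add4 _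
    rw [show m + 1 + 10 = (m + 10) + 1 by ring, Finset.sum_range_succ]
    simp only [show m + 1 + 11 = m + 12 by ring, show m + 1 + 9 = m + 10 by ring,
      show m + 1 + 8 = m + 9 by ring, show m + 1 + 7 = m + 8 by ring,
      show m + 1 + 6 = m + 7 by ring, show m + 1 + 5 = m + 6 by ring,
      show m + 1 + 4 = m + 5 by ring, show m + 1 + 3 = m + 4 by ring,
      show m + 1 + 2 = m + 3 by ring, show m + 1 + 1 = m + 2 by ring]
    simp only [show m + 10 + 1 = m + 11 by ring, e12, e11, e10, e9, e8, e7, e6, e5, e4, Nat.add_zero] at ih ⊢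
    linear_combination ih

theorem sum_sq_tetra_alt (n : ℕ) (hn : 9 ≤ n) :
    6 * ∑ k ∈ Finset.range (n + 1), (tetra k) ^ 2 =
      2 + 2 * tetra n * tetra (n + 2) + tetra (n - 1) * tetra (n + 1)
        - tetra (n - 2) * tetra n - tetra (n - 3) * tetra (n - 1)
        + 5 * tetra (n - 4) * tetra (n - 2) + 4 * tetra (n - 5) * tetra (n - 3)
        + tetra (n - 6) * tetra (n - 4) + tetra (n - 7) * tetra (n - 5)
        - tetra (n - 8) * tetra (n - 6) - tetra (n - 9) * tetra (n - 7) := by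
  obtain ⟨m, rfl⟩ : ∃ m, n = m + 9 := ⟨n - 9, by omega⟩
  have := tetra_aux m
  simp only [show m + 9 + 1 = m + 10 by ring, show m + 9 + 2 = m + 11 by ring,
    show m + 9 - 1 = m + 8 by omega, show m + 9 - 2 = m + 7 by omega,
    show m + 9 - 3 = m + 6 by omega, show m + 9 - 4 = m + 5 by omega,
    show m + 9 - 5 = m + 4 by omega, show m + 9 - 6 = m + 3 by omega,
    show m + 9 - 7 = m + 2 by omega, show m + 9 - 8 = m + 1 by omega,
    show m + 9 - 9 = m by omega]
  exact this
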